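/- For primitive words w and v that are not conjugate, there exist n₀, m₀ ∈ ℕ such that for all n > n₀ and m > m₀, the set of common factors of w^n and v^m equals the set of common factors of w^{n₀} and v^{m₀}. -/

import Mathlib

/-- `wpow w n` is the `n`-fold concatenation `w^n` of the word `w` (a list), with `w^0 = []`. -/
def wpow {α : Type*} (w : List α) (n : ℕ) : List α := (List.replicate n w).flatten

/-- A nonempty word is primitive if it is not a power of any word other than itself. -/
def Primitive {α : Type*} (w : List α) : Prop :=
  w ≠ [] ∧ ∀ (z : List α) (m : ℕ), z ≠ [] → w = wpow z m → w = z

/-- `expw w u` is the maximal `m` such that `w^m` is a factor of `u`. -/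
noncomputable def expw {α : Type*} (w u : List α) : ℕ := sSup {m : ℕ | wpow w m <:+: u}

/-- Two words are conjugate if `w = x·y` and `v = y·x`. -/
def Conj {α : Type*} (w v : List α) : Prop := ∃ x y : List α, w = x ++ y ∧ v = y ++ x

section Aux
variable {α : Type*}

theorem wpow_succ (w : List α) (n : ℕ) : wpow w (n+1) = w ++ wpow w n := by
  simp [wpow, List.replicate_succ]

theorem wpow_length (w : List α) (n : ℕ) : (wpow w n).length = n * w.length := by
  induction n with
  | zero => simp [wpow]
  | succ n ih => rw [wpow_succ, List.length_append, ih]; ring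

theorem wpow_add (w : List α) (a b : ℕ) : wpow w (a+b) = wpow w a ++ wpow w b := by
  induction a with
  | zero => simp [wpow]
  | succ a ih => rw [Nat.succ_add, wpow_succ, wpow_succ, ih, List.append_assoc]

theorem wpow_getElem? (w : List α) (n i : ℕ) (hi : i < n * w.length) :
    (wpow w n)[i]? = w[i % w.length]? := by
  induction n generalizing i with
  | zero => omega
  | succ n ih =>
    have hp : 0 < w.length := by
      rcases Nat.eq_zero_or_pos w.length with h | h
      · rw [h, Nat.mul_zero] at hi; omega
      · exact h
    rw [wpow_succ]
    rcases lt_or_ge i w.length with h | h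
    · rw [List.getElem?_append_left h, Nat.mod_eq_of_lt h]
    · have hb : i - w.length < n * w.length := by
        have hsm : (n+1) * w.length = n * w.length + w.length := by ring
        have hsm2 : n.succ * w.length = n * w.length + w.length := Nat.succ_mul n w.length
        omega
      rw [List.getElem?_append_right h, ih _ hb, Nat.mod_eq_sub_mod h]

theorem infix_iff' (u t : List α) :
    u <:+: t ↔ ∃ s, s + u.length ≤ t.length ∧ ∀ j < u.length, u[j]? = t[s + j]? := by
  constructor
  · rintro ⟨l₁, l₂, rfl⟩
    refine ⟨l₁.length, by simp only [List.length_append]; omega, fun j hj => ?_⟩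
    rw [List.getElem?_append_left (by simp only [List.length_append]; omega),
      List.getElem?_append_right (by omega)]
    congr 1
    omega
  · rintro ⟨s, hs, h⟩
    have he : u = (t.drop s).take u.length := by
      apply List.ext_getElem?
      intro j
      rcases lt_or_ge j u.length with hj | hj
      · rw [List.getElem?_take_of_lt hj, List.getElem?_drop, h j hj]
      · rw [List.getElem?_eq_none hj, List.getElem?_eq_none]
        simp only [List.length_take, List.length_drop]
        omega
    rw [he]
    exact ((t.drop s).take_prefix u.length).isInfix.trans (t.drop_suffix s).isInfix

theorem fine_wilf {β : Type*} :
    ∀ (N : ℕ) (f : ℕ → β) (p q L : ℕ), p + q ≤ N → 0 < p → 0 < q → p + q ≤ L →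
    (∀ i, i + p < L → f (i + p) = f i) → (∀ i, i + q < L → f (i + q) = f i) →
    ∀ i, i + Nat.gcd p q < L → f (i + Nat.gcd p q) = f i := by
  intro N
  induction N with
  | zero => intro f p q L hN hp; omega
  | succ N ih =>
    intro f p q L hN hp hq hL h1 h2
    rcases lt_trichotomy p q with hlt | heq | hgt
    · -- p < q : reduce to (p, q - p) on [0, L - p)
      have hsum : p + (q - p) ≤ N := by omega
      have h1' : ∀ i, i + p < L - p → f (i + p) = f i := fun i hi => h1 i (by omega)
      have h2' : ∀ i, i + (q - p) < L - p → f (i + (q - p)) = f i := by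
        intro i hi
        have e1 : f (i + (q - p) + p) = f (i + (q - p)) := h1 _ (by omega)
        have e2 : i + (q - p) + p = i + q := by omega
        rw [e2] at e1
        rw [← e1]
        exact h2 i (by omega)
      have hgcd : Nat.gcd p (q - p) = Nat.gcd p q := by
        have := Nat.gcd_add_self_right p (q - p)
        rw [show q - p + p = q from by omega] at this
        exact this.symm
      have inner := ih f p (q - p) (L - p) hsum hp (by omega) (by omega) h1' h2'
      rw [hgcd] at inner
      set g := Nat.gcd p q with hgdef
      have hg0 : 0 < g := Nat.gcd_pos_of_pos_left q hp
      have hgdq : g ∣ q - p := by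
        have := Nat.dvd_sub (Nat.gcd_dvd_right p q) (Nat.gcd_dvd_left p q)
        exact this
      have hgle : g ≤ q - p := Nat.le_of_dvd (by omega) hgdq
      intro i hi
      by_cases hc : i + g < L - p
      · exact inner i hc
      · have hpi : p ≤ i := by omega
        have e1 : f (i + g) = f (i - p + g) := by
          rw [show i + g = (i - p + g) + p from by omega]
          exact h1 _ (by omega)
        have e2 : f (i - p + g) = f (i - p) := inner (i - p) (by omega)
        have e3 : f (i - p + p) = f (i - p) := h1 (i - p) (by omega)
        rw [show i - p + p = i from by omega] at e3
        rw [e1, e2, e3]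
    · subst heq
      intro i hi
      rw [Nat.gcd_self] at hi ⊢
      exact h1 i hi
    · -- q < p : reduce to (q, p - q) on [0, L - q)
      have hsum : q + (p - q) ≤ N := by omega
      have h1' : ∀ i, i + q < L - q → f (i + q) = f i := fun i hi => h2 i (by omega)
      have h2' : ∀ i, i + (p - q) < L - q → f (i + (p - q)) = f i := by
        intro i hi
        have e1 : f (i + (p - q) + q) = f (i + (p - q)) := h2 _ (by omega)
        have e2 : i + (p - q) + q = i + p := by omega
        rw [e2] at e1
        rw [← e1]
        exact h1 i (by omega)
      have hgcd : Nat.gcd q (p - q) = Nat.gcd p q := by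
        have := Nat.gcd_add_self_right q (p - q)
        rw [show p - q + q = p from by omega] at this
        rw [← this, Nat.gcd_comm]
      have inner := ih f q (p - q) (L - q) hsum hq (by omega) (by omega) h1' h2'
      rw [hgcd] at inner
      set g := Nat.gcd p q with hgdef
      have hg0 : 0 < g := Nat.gcd_pos_of_pos_left q hp
      have hgdq : g ∣ p - q := by
        exact Nat.dvd_sub (Nat.gcd_dvd_left p q) (Nat.gcd_dvd_right p q)
      have hgle : g ≤ p - q := Nat.le_of_dvd (by omega) hgdq
      intro i hi
      by_cases hc : i + g < L - q
      · exact inner i hc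
      · have hpi : q ≤ i := by omega
        have e1 : f (i + g) = f (i - q + g) := by
          rw [show i + g = (i - q + g) + q from by omega]
          exact h2 _ (by omega)
        have e2 : f (i - q + g) = f (i - q) := inner (i - q) (by omega)
        have e3 : f (i - q + q) = f (i - q) := h2 (i - q) (by omega)
        rw [show i - q + q = i from by omega] at e3
        rw [e1, e2, e3]

theorem getElem?_mod_period (w : List α) (g : ℕ) (hg : 0 < g)
    (h : ∀ i, i + g < w.length → w[i + g]? = w[i]?) :
    ∀ i, i < w.length → w[i]? = w[i % g]? := by
  intro i
  induction i using Nat.strong_induction_on with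
  | _ i ih =>
    intro hi
    rcases lt_or_ge i g with hlt | hle
    · rw [Nat.mod_eq_of_lt hlt]
    · calc w[i]? = w[(i - g) + g]? := by rw [Nat.sub_add_cancel hle]
        _ = w[i - g]? := h _ (by omega)
        _ = w[(i - g) % g]? := ih (i - g) (by omega) (by omega)
        _ = w[i % g]? := by rw [← Nat.mod_eq_sub_mod hle]

theorem eq_wpow_of_period (w : List α) (g : ℕ) (hg : 0 < g) (hgle : g ≤ w.length)
    (hdvd : g ∣ w.length)
    (h : ∀ i, i + g < w.length → w[i + g]? = w[i]?) :
    w = wpow (w.take g) (w.length / g) := by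
  have hlen : (w.take g).length = g := by rw [List.length_take]; omega
  have hlen2 : (w.length / g) * (w.take g).length = w.length := by
    rw [hlen, Nat.div_mul_cancel hdvd]
  apply List.ext_getElem?
  intro i
  rcases lt_or_ge i w.length with hi | hi
  · rw [wpow_getElem? _ _ _ (by omega), hlen,
      List.getElem?_take_of_lt (Nat.mod_lt _ hg)]
    exact getElem?_mod_period w g hg h i hi
  · rw [List.getElem?_eq_none hi, List.getElem?_eq_none]
    rw [wpow_length, hlen2]
    exact hi

theorem exists_aligned (s p : ℕ) (hp : 0 < p) : ∃ c, c < p ∧ (s + c) % p = 0 := by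
  rcases Nat.eq_zero_or_pos (s % p) with h0 | h0
  · exact ⟨0, hp, by simpa using h0⟩
  · have hdm := Nat.div_add_mod s p
    have hmlt := Nat.mod_lt s hp
    refine ⟨p - s % p, by omega, ?_⟩
    rw [show s + (p - s % p) = p * (s / p) + p from by omega, Nat.add_mod_right,
      Nat.mul_mod_right]

theorem not_primitive_of_period {w : List α} (hw : Primitive w) {g : ℕ} (hg : 0 < g)
    (hglt : g < w.length) (hdvd : g ∣ w.length)
    (h : ∀ i, i + g < w.length → w[i + g]? = w[i]?) : False := by
  have hpow := eq_wpow_of_period w g hg (le_of_lt hglt) hdvd h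
  have hne : w.take g ≠ [] := by
    apply List.ne_nil_of_length_pos
    rw [List.length_take]
    omega
  have heq := hw.2 (w.take g) (w.length / g) hne hpow
  have := congrArg List.length heq
  rw [List.length_take] at this
  omega

theorem short_common {w v : List α} (hw : Primitive w) (hv : Primitive v) (hnc : ¬ Conj w v)
    {n m : ℕ} {u : List α} (hun : u <:+: wpow w n) (hum : u <:+: wpow v m) :
    u.length < 2 * (w.length + v.length) := by
  by_contra hLc
  push_neg at hLc
  have hp : 0 < w.length := List.length_pos_iff.mpr hw.1
  have hq : 0 < v.length := List.length_pos_iff.mpr hv.1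
  set p := w.length with hpdef
  set q := v.length with hqdef
  set L := u.length with hLdef
  obtain ⟨s, hs, hsj⟩ := (infix_iff' u (wpow w n)).1 hun
  obtain ⟨t, ht, htj⟩ := (infix_iff' u (wpow v m)).1 hum
  rw [wpow_length] at hs ht
  have hws : ∀ j, j < L → u[j]? = w[(s + j) % p]? := fun j hj => by
    rw [hsj j hj, wpow_getElem? _ _ _ (by omega)]
  have hvt : ∀ j, j < L → u[j]? = v[(t + j) % q]? := fun j hj => by
    rw [htj j hj, wpow_getElem? _ _ _ (by omega)]
  set g := Nat.gcd p q with hgdef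
  have hg0 : 0 < g := Nat.gcd_pos_of_pos_left q hp
  have hgp : g ∣ p := Nat.gcd_dvd_left p q
  have hgq : g ∣ q := Nat.gcd_dvd_right p q
  have hglep : g ≤ p := Nat.le_of_dvd hp hgp
  have hgleq : g ≤ q := Nat.le_of_dvd hq hgq
  -- u has periods p and q, hence period g by Fine–Wilf
  have hperp : ∀ i, i + p < L → u[i + p]? = u[i]? := by
    intro i hi
    rw [hws _ hi, hws _ (by omega)]
    congr 1
    rw [show s + (i + p) = (s + i) + p from by omega, Nat.add_mod_right]
  have hperq : ∀ i, i + q < L → u[i + q]? = u[i]? := by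
    intro i hi
    rw [hvt _ hi, hvt _ (by omega)]
    congr 1
    rw [show t + (i + q) = (t + i) + q from by omega, Nat.add_mod_right]
  have hper : ∀ i, i + g < L → u[i + g]? = u[i]? :=
    fine_wilf (p + q) (fun i => u[i]?) p q L le_rfl hp hq (by omega) hperp hperq
  -- aligned copies of w and v inside u
  obtain ⟨c, hcp, hc0⟩ := exists_aligned s p hp
  obtain ⟨d, hdq, hd0⟩ := exists_aligned t q hq
  have hwu : ∀ j, j < p → w[j]? = u[c + j]? := by
    intro j hj
    rw [hws (c + j) (by omega)]
    congr 1
    rw [show s + (c + j) = (s + c) + j from by omega, Nat.add_mod, hc0, Nat.zero_add,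
      Nat.mod_eq_of_lt hj, Nat.mod_eq_of_lt hj]
  have hvu : ∀ j, j < q → v[j]? = u[d + j]? := by
    intro j hj
    rw [hvt (d + j) (by omega)]
    congr 1
    rw [show t + (d + j) = (t + d) + j from by omega, Nat.add_mod, hd0, Nat.zero_add,
      Nat.mod_eq_of_lt hj, Nat.mod_eq_of_lt hj]
  rcases lt_or_eq_of_le hglep with hltp | heqp
  · -- g < p : w is a proper power, contradiction
    refine not_primitive_of_period hw hg0 hltp hgp ?_
    intro i hi
    rw [hwu (i + g) (by omega), hwu i (by omega),
      show c + (i + g) = (c + i) + g from by omega]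
    exact hper (c + i) (by omega)
  · rcases lt_or_eq_of_le hgleq with hltq | heqq
    · -- g < q : v is a proper power, contradiction
      refine not_primitive_of_period hv hg0 hltq hgq ?_
      intro i hi
      rw [hvu (i + g) (by omega), hvu i (by omega),
        show d + (i + g) = (d + i) + g from by omega]
      exact hper (d + i) (by omega)
    · -- p = q = g : v is a rotation of w, contradiction with non-conjugacy
      have hpq : p = q := by omega
      have hrlt : (s + d) % p < p := Nat.mod_lt _ hp
      have hrot : v = w.rotate ((s + d) % p) := by
        apply List.ext_getElem?
        intro j
        rcases lt_or_ge j q with hj | hj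
        · rw [List.getElem?_rotate (show j < w.length from by omega), hvu j hj,
            hws (d + j) (by omega)]
          congr 1
          rw [Nat.add_mod_mod, show j + (s + d) = s + (d + j) from by omega]
        · rw [List.getElem?_eq_none (by omega), List.getElem?_eq_none
            (by rw [List.length_rotate]; omega)]
      apply hnc
      refine ⟨w.take ((s + d) % p), w.drop ((s + d) % p), (List.take_append_drop _ w).symm, ?_⟩
      rw [hrot, List.rotate_eq_drop_append_take hrlt.le]

theorem infix_wpow_small {w : List α} (hp : 0 < w.length) {n : ℕ} {u : List α}
    (hu : u <:+: wpow w n) (n₀ : ℕ) (hlen : w.length + u.length ≤ n₀ * w.length) :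
    u <:+: wpow w n₀ := by
  obtain ⟨s, hs, hsj⟩ := (infix_iff' u (wpow w n)).1 hu
  rw [wpow_length] at hs
  apply (infix_iff' u (wpow w n₀)).2
  have hml := Nat.mod_lt s hp
  refine ⟨s % w.length, by rw [wpow_length]; omega, ?_⟩
  intro j hj
  rw [hsj j hj, wpow_getElem? _ _ _ (by omega), wpow_getElem? _ _ _ (by omega)]
  congr 1
  exact (Nat.mod_add_mod s w.length j).symm

theorem wpow_infix_of_le (w : List α) {a b : ℕ} (h : a ≤ b) : wpow w a <:+: wpow w b :=
  ⟨[], wpow w (b - a), by rw [List.nil_append, ← wpow_add,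
    show a + (b - a) = b from by omega]⟩


end Aux

theorem stmt_5 {α : Type*} (w v : List α) (hw : Primitive w) (hv : Primitive v)
    (hnc : ¬ Conj w v) :
    ∃ n₀ m₀ : ℕ, ∀ n > n₀, ∀ m > m₀,
      {u : List α | u <:+: wpow w n ∧ u <:+: wpow v m} =
        {u : List α | u <:+: wpow w n₀ ∧ u <:+: wpow v m₀} := by
  have hp : 0 < w.length := List.length_pos_iff.mpr hw.1
  have hq : 0 < v.length := List.length_pos_iff.mpr hv.1
  refine ⟨3 * (w.length + v.length), 3 * (w.length + v.length), fun n hn m hm => ?_⟩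
  ext u
  simp only [Set.mem_setOf_eq]
  constructor
  · rintro ⟨h1, h2⟩
    have hlen := short_common hw hv hnc h1 h2
    have hb1 : 3 * (w.length + v.length) ≤ 3 * (w.length + v.length) * w.length :=
      Nat.le_mul_of_pos_right _ hp
    have hb2 : 3 * (w.length + v.length) ≤ 3 * (w.length + v.length) * v.length :=
      Nat.le_mul_of_pos_right _ hq
    exact ⟨infix_wpow_small hp h1 _ (by omega), infix_wpow_small hq h2 _ (by omega)⟩
  · rintro ⟨h1, h2⟩
    exact ⟨h1.trans (wpow_infix_of_le w hn.le), h2.trans (wpow_infix_of_le v hm.le)⟩
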